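/- Let p(z) = z^n + a_{n-1}z^{n-1} + … + a_1 z + a_0 be a monic polynomial over ℂ of degree n ≥ 3 with p(z) not identically equal to z^n (i.e., some a_i ≠ 0, so μ(p) > 0). Then Γ(p) ≤ 1.4655 · n · μ(p), i.e., the relative overestimation Γ(p)/μ(p) of the maximum root modulus by the bound Γ(p) does not exceed 1.4655·n. -/

import Mathlib

open Finset

/-- The `k`-th term in the definition of `τ`: for `k = 3` it is `(|a (n-3)|/2.15)^(1/3)`,
for `k = 4` it is `(|a (n-4)|/2)^(1/4)`, and for `k ≥ 5` it is `|a (n-k)|^(1/k)`. -/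
noncomputable def tauTerm (n k : ℕ) (a : ℕ → ℂ) : ℝ :=
  if k = 3 then (‖a (n - 3)‖ / 2.15) ^ ((1 : ℝ) / 3)
  else if k = 4 then (‖a (n - 4)‖ / 2) ^ ((1 : ℝ) / 4)
  else (‖a (n - k)‖) ^ ((1 : ℝ) / k)

/-- `τ = max{(|a_{n-3}|/2.15)^(1/3), (|a_{n-4}|/2)^(1/4), |a_{n-5}|^(1/5), …, |a_0|^(1/n)}`. -/
noncomputable def tau (n : ℕ) (a : ℕ → ℂ) (hn : 3 ≤ n) : ℝ :=
  (Finset.Icc 3 n).sup' (Finset.nonempty_Icc.mpr hn) (fun k => tauTerm n k a)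

/-- The root bound `Γ(p)`. -/
noncomputable def Gamma (n : ℕ) (a : ℕ → ℂ) (hn : 3 ≤ n) : ℝ :=
  max (Real.sqrt 3.15 *
        Real.sqrt ((tau n a hn) ^ 2 + max (‖a (n - 2)‖) (2 * (tau n a hn) ^ 2)))
      ((‖a (n - 1)‖ +
        Real.sqrt ((‖a (n - 1)‖) ^ 2 +
          4 * ((tau n a hn) ^ 2 + max (‖a (n - 2)‖) (2.15 * (tau n a hn) ^ 2)))) / 2)

/- ### Auxiliary lemmas -/

open Polynomial in
/-- The modulus of a product of complex numbers each bounded by `μ`. -/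
lemma prodAbsLe (μ : ℝ) (hμ0 : 0 ≤ μ) (t : Multiset ℂ) (h : ∀ x ∈ t, ‖x‖ ≤ μ) :
    ‖t.prod‖ ≤ μ ^ Multiset.card t := by
  induction t using Multiset.induction with
  | empty => simp
  | cons a s ih =>
    simp only [Multiset.prod_cons, norm_mul, Multiset.card_cons, pow_succ']
    exact mul_le_mul (h a (Multiset.mem_cons_self a s))
      (ih fun x hx => h x (Multiset.mem_cons_of_mem hx))
      (norm_nonneg _) hμ0

/-- Bound on elementary symmetric functions of complex numbers of modulus at most `μ`. -/
lemma esymmAbsLe (μ : ℝ) (hμ0 : 0 ≤ μ) (s : Multiset ℂ) (h : ∀ x ∈ s, ‖x‖ ≤ μ)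
    (k : ℕ) : ‖s.esymm k‖ ≤ ((Multiset.card s).choose k) * μ ^ k := by
  rw [Multiset.esymm]
  calc ‖((s.powersetCard k).map Multiset.prod).sum‖
      ≤ (((s.powersetCard k).map Multiset.prod).map (‖·‖)).sum := by
        simpa using norm_multiset_sum_le ((s.powersetCard k).map Multiset.prod)
    _ ≤ Multiset.card (((s.powersetCard k).map Multiset.prod).map (‖·‖)) • (μ ^ k) := by
        apply Multiset.sum_le_card_nsmul
        intro x hx
        simp only [Multiset.mem_map] at hx
        obtain ⟨y, hy, rfl⟩ := hx
        obtain ⟨t, ht, rfl⟩ := hy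
        rw [Multiset.mem_powersetCard] at ht
        have := prodAbsLe μ hμ0 t (fun x hx => h x (Multiset.mem_of_le ht.1 hx))
        rwa [ht.2] at this
    _ = ((Multiset.card s).choose k) * μ ^ k := by
        simp [Multiset.card_powersetCard, nsmul_eq_mul]

open Polynomial in
/-- Vieta-type bound: the coefficients of a monic polynomial whose roots all have modulus
at most `μ` are bounded by binomial coefficients times powers of `μ`. -/
lemma coeffAbsLe (n : ℕ) (hn : 0 < n) (a : ℕ → ℂ) (μ : ℝ) (hμ0 : 0 ≤ μ)
    (hroot : ∀ lam : ℂ, lam ^ n + ∑ i ∈ Finset.range n, a i * lam ^ i = 0 → ‖lam‖ ≤ μ)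
    (k : ℕ) (hk1 : 1 ≤ k) (hkn : k ≤ n) :
    ‖a (n - k)‖ ≤ (n.choose k) * μ ^ k := by
  set P : ℂ[X] := X ^ n + ∑ i ∈ Finset.range n, C (a i) * X ^ i with hP
  have hq : (∑ i ∈ Finset.range n, C (a i) * X ^ i).degree < (X ^ n : ℂ[X]).degree := by
    rw [degree_X_pow]
    refine lt_of_le_of_lt (degree_sum_le _ _) ?_
    rw [Finset.sup_lt_iff (by exact_mod_cast WithBot.bot_lt_coe n)]
    intro i hi
    exact lt_of_le_of_lt (degree_C_mul_X_pow_le _ _)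
      (by exact_mod_cast WithBot.coe_lt_coe.2 (Finset.mem_range.1 hi))
  have hmonic : P.Monic := (monic_X_pow n).add_of_left hq
  have hdeg : P.natDegree = n := by
    rw [hP, natDegree_add_eq_left_of_degree_lt hq, natDegree_X_pow]
  have hsplits : P.Splits := IsAlgClosed.splits P
  have hcard : Multiset.card P.roots = P.natDegree := (splits_iff_card_roots).1 hsplits
  have hrootbd : ∀ x ∈ P.roots, ‖x‖ ≤ μ := by
    intro x hx
    have hx0 : P.eval x = 0 := (mem_roots (hmonic.ne_zero)).1 hx
    apply hroot
    rw [← hx0, hP]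
    simp [eval_finset_sum]
  have hcoeff : P.coeff (n - k) = a (n - k) := by
    have hlt : n - k < n := Nat.sub_lt hn hk1
    rw [hP, coeff_add, coeff_X_pow, if_neg (Nat.ne_of_lt hlt), finset_sum_coeff]
    simp only [coeff_C_mul, coeff_X_pow, mul_ite, mul_one, mul_zero]
    rw [Finset.sum_ite_eq (Finset.range n) (n - k) a, if_pos (Finset.mem_range.2 hlt)]
    ring
  have hvieta := Polynomial.coeff_eq_esymm_roots_of_card hcard
    (k := n - k) (by rw [hdeg]; omega)
  rw [hcoeff, hmonic.leadingCoeff, hdeg] at hvieta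
  have hnk : n - (n - k) = k := by omega
  rw [hnk] at hvieta
  rw [hvieta]
  have := esymmAbsLe μ hμ0 P.roots hrootbd k
  rw [hcard, hdeg] at this
  simpa using this

/-- The constant `(1/12.9)^(1/3)`. -/
noncomputable def cc : ℝ := (1/12.9 : ℝ) ^ ((1:ℝ)/3)

lemma cc_nonneg : 0 ≤ cc := Real.rpow_nonneg (by norm_num) _

lemma cc_cube : cc ^ (3:ℕ) = 1/12.9 := by
  rw [cc, ← Real.rpow_natCast ((1/12.9:ℝ) ^ ((1:ℝ)/3)) 3, ← Real.rpow_mul (by norm_num)]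
  norm_num

lemma cc_sq_le : cc ^ 2 ≤ 0.1818064 := by
  have h6 : (cc ^ 2) ^ (3:ℕ) = (1/12.9)^2 := by
    rw [← pow_mul, show 2*3 = 3*2 from rfl, pow_mul, cc_cube]
  refine (pow_le_pow_iff_left₀ (by positivity) (by norm_num) (by norm_num : (3:ℕ) ≠ 0)).mp ?_
  rw [h6]
  norm_num

lemma fact_cube : ∀ k, 5 ≤ k → (12.9:ℝ)^k ≤ ((k.factorial : ℝ))^3 := by
  intro k hk
  induction k, hk using Nat.le_induction with
  | base => norm_num [Nat.factorial]
  | succ k hk ih =>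
    have hf1 : (1:ℝ) ≤ (k.factorial : ℝ) := by
      exact_mod_cast Nat.one_le_iff_ne_zero.2 k.factorial_pos.ne'
    have hk6 : (6:ℝ) ≤ (k:ℝ) + 1 := by exact_mod_cast Nat.succ_le_succ hk
    rw [pow_succ, Nat.factorial_succ]
    push_cast
    calc (12.9:ℝ)^k * 12.9 ≤ ((k.factorial:ℝ))^3 * 12.9 := by
          nlinarith [pow_pos (by norm_num : (0:ℝ) < 12.9) k]
      _ ≤ (((k:ℝ)+1) * (k.factorial:ℝ))^3 := by
          rw [mul_pow]
          have h216 : (216:ℝ) ≤ ((k:ℝ)+1)^3 := by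
            nlinarith [pow_le_pow_left₀ (by norm_num : (0:ℝ) ≤ 6) hk6 3]
          nlinarith [pow_pos (lt_of_lt_of_le one_pos hf1) 3]

lemma rpow_term_le (x N : ℝ) (k : ℕ) (hk : 3 ≤ k) (hx : 0 ≤ x) (hN : 0 ≤ N)
    (h : x ^ (3:ℕ) * (12.9:ℝ) ^ k ≤ (N ^ k) ^ (3:ℕ)) : x ^ ((1:ℝ)/k) ≤ cc * N := by
  have hk0 : (k:ℝ) ≠ 0 := by positivity
  have l1 : x ^ ((1:ℝ)/k) = (x ^ (3:ℕ)) ^ ((1:ℝ)/(3*k)) := by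
    rw [← Real.rpow_natCast x 3, ← Real.rpow_mul hx]
    congr 1
    field_simp
    norm_num
  have l2 : cc * N = (((1:ℝ)/12.9) ^ k * (N ^ k) ^ (3:ℕ)) ^ ((1:ℝ)/(3*(k:ℝ))) := by
    rw [Real.mul_rpow (by positivity) (by positivity)]
    congr 1
    · rw [← Real.rpow_natCast (1/12.9 : ℝ) k, ← Real.rpow_mul (by norm_num), cc]
      congr 1
      field_simp
    · rw [← pow_mul, ← Real.rpow_natCast N (k*3), ← Real.rpow_mul hN]
      rw [show ((k*3 : ℕ):ℝ) * ((1:ℝ)/(3*(k:ℝ))) = 1 by push_cast; field_simp]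
      exact (Real.rpow_one N).symm
  rw [l1, l2]
  apply Real.rpow_le_rpow (by positivity) _ (by positivity)
  have h129 : (0:ℝ) < 12.9 ^ k := by positivity
  rw [div_pow, one_pow]
  rw [div_mul_eq_mul_div, le_div_iff₀ h129]
  linarith [h]

/-- For a monic polynomial of degree `n ≥ 3`, not identically `z^n`, with maximum
root-modulus `μ`, the bound `Γ(p)` satisfies `Γ(p) ≤ 1.4655 · n · μ`. -/
theorem Gamma_le_mul_maxRootModulus (n : ℕ) (hn : 3 ≤ n) (a : ℕ → ℂ)
    (hne : ∃ i < n, a i ≠ 0) (μ : ℝ)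
    (hμ : IsGreatest {x : ℝ | ∃ lam : ℂ,
      lam ^ n + ∑ i ∈ Finset.range n, a i * lam ^ i = 0 ∧ x = ‖lam‖} μ) :
    Gamma n a hn ≤ 1.4655 * n * μ := by
  obtain ⟨lam0, -, hμeq⟩ := hμ.1
  have hμ0 : 0 ≤ μ := hμeq ▸ norm_nonneg lam0
  have hroot : ∀ lam : ℂ, lam ^ n + ∑ i ∈ Finset.range n, a i * lam ^ i = 0 →
      ‖lam‖ ≤ μ := fun lam h => hμ.2 ⟨lam, h, rfl⟩
  set N : ℝ := (n:ℝ) * μ with hNdef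
  have hN0 : 0 ≤ N := by positivity
  -- coefficient bounds
  have hA : ∀ k, 1 ≤ k → k ≤ n → ‖a (n - k)‖ * (k.factorial : ℝ) ≤ N ^ k := by
    intro k hk1 hkn
    have h1 := coeffAbsLe n (by omega) a μ hμ0 hroot k hk1 hkn
    have h2 : n.choose k * k.factorial ≤ n ^ k := by
      rw [mul_comm, ← Nat.descFactorial_eq_factorial_mul_choose]
      exact Nat.descFactorial_le_pow n k
    have h2' : (n.choose k : ℝ) * (k.factorial : ℝ) ≤ (n:ℝ) ^ k := by exact_mod_cast h2
    have hfk : (0:ℝ) ≤ (k.factorial:ℝ) := by positivity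
    calc ‖a (n-k)‖ * (k.factorial:ℝ) ≤ ((n.choose k : ℝ) * μ ^ k) * (k.factorial:ℝ) :=
          mul_le_mul_of_nonneg_right h1 hfk
      _ = ((n.choose k : ℝ) * (k.factorial:ℝ)) * μ ^ k := by ring
      _ ≤ (n:ℝ)^k * μ^k := mul_le_mul_of_nonneg_right h2' (by positivity)
      _ = N ^ k := (mul_pow _ _ _).symm
  -- tau bound
  have htau : tau n a hn ≤ cc * N := by
    apply Finset.sup'_le
    intro k hk
    rw [Finset.mem_Icc] at hk
    obtain ⟨hk3, hkn⟩ := hk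
    have habs : (0:ℝ) ≤ ‖a (n - k)‖ := norm_nonneg _
    rw [tauTerm]
    split_ifs with h3 h4
    · subst h3
      rw [show ((1:ℝ)/3) = (1:ℝ)/((3:ℕ):ℝ) by norm_num]
      apply rpow_term_le _ _ 3 le_rfl (by positivity) hN0
      have hA3 : ‖a (n-3)‖ * 6 ≤ N ^ 3 := by
        have := hA 3 (by omega) hkn
        norm_num [Nat.factorial] at this
        linarith
      calc (‖a (n-3)‖ / 2.15) ^ (3:ℕ) * (12.9:ℝ)^(3:ℕ)
          = (‖a (n-3)‖ * 6) ^ (3:ℕ) := by ring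
        _ ≤ (N ^ 3) ^ (3:ℕ) := pow_le_pow_left₀ (by positivity) hA3 3
    · subst h4
      rw [show ((1:ℝ)/4) = (1:ℝ)/((4:ℕ):ℝ) by norm_num]
      apply rpow_term_le _ _ 4 (by omega) (by positivity) hN0
      have hA4 : ‖a (n-4)‖ * 24 ≤ N ^ 4 := by
        have := hA 4 (by omega) hkn
        norm_num [Nat.factorial] at this
        linarith
      have h24 : (‖a (n-4)‖ * 24)^(3:ℕ) ≤ (N^4)^(3:ℕ) :=
        pow_le_pow_left₀ (by positivity) hA4 3
      nlinarith [pow_nonneg habs 3]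
    · have hk5 : 5 ≤ k := by omega
      apply rpow_term_le _ _ k hk3 habs hN0
      have hAk := hA k (by omega) hkn
      have hAk3 : (‖a (n-k)‖ * (k.factorial:ℝ))^(3:ℕ) ≤ (N^k)^(3:ℕ) :=
        pow_le_pow_left₀ (by positivity) hAk 3
      have hfc := fact_cube k hk5
      have h3nn : (0:ℝ) ≤ ‖a (n-k)‖^(3:ℕ) := by positivity
      calc ‖a (n-k)‖^(3:ℕ) * 12.9^k
          ≤ ‖a (n-k)‖^(3:ℕ) * ((k.factorial:ℝ))^3 :=
            mul_le_mul_of_nonneg_left hfc h3nn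
        _ = (‖a (n-k)‖ * (k.factorial:ℝ))^(3:ℕ) := by ring
        _ ≤ (N^k)^(3:ℕ) := hAk3
  have ht0 : 0 ≤ tau n a hn := by
    refine le_trans ?_ (Finset.le_sup' (fun k => tauTerm n k a)
      (Finset.mem_Icc.mpr ⟨le_refl 3, hn⟩))
    rw [tauTerm, if_pos rfl]
    positivity
  have ht2 : (tau n a hn)^2 ≤ 0.1818064 * N^2 := by
    have h1 : (tau n a hn)^2 ≤ (cc*N)^2 := pow_le_pow_left₀ ht0 htau 2
    nlinarith [mul_le_mul_of_nonneg_right cc_sq_le (sq_nonneg N)]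
  have ha1 : ‖a (n-1)‖ ≤ N := by
    have := hA 1 (by omega) (by omega)
    norm_num [Nat.factorial] at this
    simpa using this
  have ha2 : ‖a (n-2)‖ * 2 ≤ N^2 := by
    have := hA 2 (by omega) (by omega)
    norm_num [Nat.factorial] at this
    linarith
  have goal_eq : (1.4655:ℝ) * n * μ = 1.4655 * N := by rw [hNdef]; ring
  rw [Gamma, goal_eq]
  apply max_le
  · have hX : (tau n a hn)^2 + max (‖a (n-2)‖) (2*(tau n a hn)^2)
        ≤ 0.6818064 * N^2 := by
      have hm : max (‖a (n-2)‖) (2*(tau n a hn)^2) ≤ 0.5 * N^2 := by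
        apply max_le
        · linarith
        · nlinarith [ht2, sq_nonneg N]
      linarith
    have hXnn : (0:ℝ) ≤ (tau n a hn)^2 + max (‖a (n-2)‖) (2*(tau n a hn)^2) := by
      have : (0:ℝ) ≤ ‖a (n-2)‖ := norm_nonneg _
      have := le_max_left (‖a (n-2)‖) (2*(tau n a hn)^2)
      positivity
    calc Real.sqrt 3.15 * Real.sqrt ((tau n a hn)^2 +
            max (‖a (n-2)‖) (2*(tau n a hn)^2))
        = Real.sqrt (3.15 * ((tau n a hn)^2 +
            max (‖a (n-2)‖) (2*(tau n a hn)^2))) :=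
          (Real.sqrt_mul (by norm_num) _).symm
      _ ≤ Real.sqrt ((1.4655*N)^2) := Real.sqrt_le_sqrt (by nlinarith [sq_nonneg N])
      _ = 1.4655*N := Real.sqrt_sq (by positivity)
  · have ha1sq : (‖a (n-1)‖)^2 ≤ N^2 :=
      pow_le_pow_left₀ (norm_nonneg _) ha1 2
    have hmax : max (‖a (n-2)‖) (2.15*(tau n a hn)^2) ≤ 0.5 * N^2 := by
      apply max_le
      · linarith
      · nlinarith [ht2, sq_nonneg N]
    have hY : (‖a (n-1)‖)^2 + 4*((tau n a hn)^2 +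
        max (‖a (n-2)‖) (2.15*(tau n a hn)^2)) ≤ 3.7272256 * N^2 := by
      linarith
    have hs : Real.sqrt ((‖a (n-1)‖)^2 + 4*((tau n a hn)^2 +
        max (‖a (n-2)‖) (2.15*(tau n a hn)^2))) ≤ 1.931 * N := by
      rw [show (1.931*N : ℝ) = Real.sqrt ((1.931*N)^2) from (Real.sqrt_sq (by positivity)).symm]
      apply Real.sqrt_le_sqrt
      nlinarith [sq_nonneg N]
    linarith
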